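/- Let $(b_n)$ be a bounded positive sequence defining a symmetric moment problem with even moments $s_{2n}$, and set $U_n = s_{2n}/(b_0^2\cdots b_{n-1}^2)$. Then $\liminf_{n\to\infty} U_n^{1/n} \geq 4$. -/

import Mathlib

/-- The Jacobi operator with zero diagonal and off-diagonal entries `b n`. -/
noncomputable def jacobiOp (b : ℕ → ℝ) (f : ℕ → ℝ) : ℕ → ℝ :=
  fun n => b n * f (n + 1) + (if n = 0 then 0 else b (n - 1) * f (n - 1))

/-- The moments of the symmetric moment problem: `s_n = (Jⁿ δ₀, δ₀)`. -/
noncomputable def moment (b : ℕ → ℝ) (n : ℕ) : ℝ :=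
  ((jacobiOp b)^[n] (fun k => if k = 0 then 1 else 0)) 0

namespace S19

noncomputable def Jlin (b : ℕ → ℝ) : Module.End ℝ (ℕ → ℝ) where
  toFun := jacobiOp b
  map_add' f g := by
    funext n
    simp only [jacobiOp, Pi.add_apply]
    split <;> ring
  map_smul' c f := by
    funext n
    simp only [jacobiOp, Pi.smul_apply, smul_eq_mul, RingHom.id_apply]
    split <;> ring

def δ : ℕ → ℝ := fun k => if k = 0 then 1 else 0

noncomputable def A (b : ℕ → ℝ) (n : ℕ) : ℕ → ℝ := ((Jlin b) ^ n) δ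

lemma Jlin_apply (b : ℕ → ℝ) (f : ℕ → ℝ) : Jlin b f = jacobiOp b f := rfl

lemma A_succ (b : ℕ → ℝ) (n : ℕ) : A b (n+1) = jacobiOp b (A b n) := by
  simp only [A, pow_succ', Module.End.mul_apply]
  rfl

lemma A_add (b : ℕ → ℝ) (m n : ℕ) : A b (m+n) = ((Jlin b)^m) (A b n) := by
  simp [A, pow_add, Module.End.mul_apply]

lemma moment_eq (b : ℕ → ℝ) (n : ℕ) : moment b n = A b n 0 := by
  simp only [moment, A, Module.End.pow_apply]
  rfl

lemma A_eq_zero (b : ℕ → ℝ) : ∀ n k, n < k → A b n k = 0 := by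
  intro n
  induction n with
  | zero => intro k hk; simp [A, δ]; omega
  | succ n ih =>
    intro k hk
    rw [A_succ]
    simp only [jacobiOp]
    rw [ih (k+1) (by omega), ih (k-1) (by omega)]
    simp

lemma A_diag (b : ℕ → ℝ) : ∀ n, A b n n = ∏ i ∈ Finset.range n, b i := by
  intro n
  induction n with
  | zero => simp [A, δ]
  | succ n ih =>
    rw [A_succ]
    simp only [jacobiOp]
    rw [A_eq_zero b n (n+1+1) (by omega)]
    rw [if_neg (by omega : ¬ n+1 = 0)]
    simp only [Nat.add_sub_cancel]
    rw [ih, Finset.prod_range_succ]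
    ring

lemma A_parity (b : ℕ → ℝ) : ∀ n k, Odd (n + k) → A b n k = 0 := by
  intro n
  induction n with
  | zero =>
    intro k hk
    have : k ≠ 0 := by rintro rfl; simp [Nat.odd_iff] at hk
    simp [A, δ, this]
  | succ n ih =>
    intro k hk
    rw [A_succ]
    simp only [jacobiOp]
    rw [ih (k+1) (by rw [Nat.odd_iff] at hk ⊢; omega)]
    rcases Nat.eq_zero_or_pos k with h0 | h0
    · simp [h0]
    · rw [ih (k-1) (by rw [Nat.odd_iff] at hk ⊢; omega)]
      simp

lemma moment_odd (b : ℕ → ℝ) (n : ℕ) (hn : Odd n) : moment b n = 0 := by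
  rw [moment_eq]; exact A_parity b n 0 (by simpa using hn)

lemma A_bound (b : ℕ → ℝ) (B : ℝ) (hB0 : 0 ≤ B) (hB : ∀ n, b n ≤ B) (hb : ∀ n, 0 < b n) :
    ∀ n k, |A b n k| ≤ (2*B)^n := by
  intro n
  induction n with
  | zero =>
    intro k
    simp only [pow_zero, A, pow_zero, Module.End.one_apply, δ]
    split <;> simp
  | succ n ih =>
    intro k
    rw [A_succ]
    simp only [jacobiOp]
    have h1 : |b k * A b n (k+1)| ≤ B * (2*B)^n := by
      rw [abs_mul, abs_of_pos (hb k)]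
      exact mul_le_mul (hB k) (ih (k+1)) (abs_nonneg _) hB0
    have h2 : |(if k = 0 then (0:ℝ) else b (k-1) * A b n (k-1))| ≤ B * (2*B)^n := by
      split
      · simpa using by positivity
      · rw [abs_mul, abs_of_pos (hb (k-1))]
        exact mul_le_mul (hB _) (ih (k-1)) (abs_nonneg _) hB0
    calc |b k * A b n (k+1) + _| ≤ _ + _ := abs_add_le _ _
      _ ≤ B * (2*B)^n + B * (2*B)^n := add_le_add h1 h2
      _ = (2*B)^(n+1) := by ring

noncomputable def Sip (f g : ℕ → ℝ) (M : ℕ) : ℝ := ∑ j ∈ Finset.range M, f j * g j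

lemma Sip_jacobi (b : ℕ → ℝ) (f g : ℕ → ℝ) (M : ℕ) (hg : g M = 0) :
    Sip (jacobiOp b f) g M
      = ∑ k ∈ Finset.range M, b k * (f (k+1) * g k + f k * g (k+1)) := by
  unfold Sip
  simp only [jacobiOp, add_mul, Finset.sum_add_distrib, mul_add]
  congr 1
  · exact Finset.sum_congr rfl (fun k _ => by ring)
  · -- ∑ k ∈ range M, (if k = 0 then 0 else b (k-1) * f (k-1)) * g k
    --   = ∑ k ∈ range M, b k * (f k * g (k+1))
    cases M with
    | zero => simp
    | succ m =>
      rw [Finset.sum_range_succ']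
      simp only [if_pos rfl, zero_mul, add_zero]
      rw [Finset.sum_range_succ (fun k => b k * (f k * g (k+1))) m]
      have : ∀ i ∈ Finset.range m,
          (if i+1 = 0 then (0:ℝ) else b (i+1-1) * f (i+1-1)) * g (i+1)
            = b i * (f i * g (i+1)) := by
        intro i _
        rw [if_neg (by omega)]
        simp only [Nat.add_sub_cancel]
        ring
      rw [Finset.sum_congr rfl this, hg]
      simp

lemma Sip_symm (b : ℕ → ℝ) (f g : ℕ → ℝ) (M : ℕ) (hf : f M = 0) (hg : g M = 0) :
    Sip (jacobiOp b f) g M = Sip f (jacobiOp b g) M := by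
  rw [Sip_jacobi b f g M hg]
  have : Sip f (jacobiOp b g) M = Sip (jacobiOp b g) f M := by
    unfold Sip; exact Finset.sum_congr rfl (fun k _ => mul_comm _ _)
  rw [this, Sip_jacobi b g f M hf]
  exact Finset.sum_congr rfl (fun k _ => by ring)

lemma Sip_A (b : ℕ → ℝ) : ∀ k m M, m + k < M →
    Sip (A b m) (A b k) M = moment b (m + k) := by
  intro k
  induction k with
  | zero =>
    intro m M hM
    unfold Sip
    rw [Finset.sum_eq_single 0]
    · simp [A, δ, moment_eq]
    · intro j _ hj
      have : A b 0 j = 0 := by simp [A, δ, hj]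
      rw [this, mul_zero]
    · intro h; exact absurd (Finset.mem_range.mpr (by omega)) h
  | succ k ih =>
    intro m M hM
    rw [A_succ]
    rw [← Sip_symm b (A b m) (A b k) M (A_eq_zero b m M (by omega)) (A_eq_zero b k M (by omega))]
    rw [← A_succ]
    have := ih (m+1) M (by omega)
    rw [this]
    congr 1
    omega

open Polynomial

noncomputable def vec (b : ℕ → ℝ) (p : ℝ[X]) : ℕ → ℝ := (Polynomial.aeval (Jlin b) p) δ

noncomputable def Lfun (b : ℕ → ℝ) (p : ℝ[X]) : ℝ := vec b p 0

lemma vec_expand (b : ℕ → ℝ) (p : ℝ[X]) (N : ℕ) (hN : p.natDegree < N) :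
    vec b p = ∑ i ∈ Finset.range N, p.coeff i • A b i := by
  unfold vec
  rw [Polynomial.aeval_eq_sum_range' hN]
  rw [LinearMap.sum_apply]
  exact Finset.sum_congr rfl (fun i _ => by rw [LinearMap.smul_apply]; rfl)

lemma vec_apply (b : ℕ → ℝ) (p : ℝ[X]) (N : ℕ) (hN : p.natDegree < N) (j : ℕ) :
    vec b p j = ∑ i ∈ Finset.range N, p.coeff i * A b i j := by
  rw [vec_expand b p N hN]
  simp

lemma pow_vec (b : ℕ → ℝ) (t : ℕ) (p : ℝ[X]) (N : ℕ) (hN : p.natDegree < N) :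
    ((Jlin b)^t) (vec b p) = ∑ i ∈ Finset.range N, p.coeff i • A b (t + i) := by
  rw [vec_expand b p N hN, map_sum]
  exact Finset.sum_congr rfl (fun i _ => by
    rw [map_smul, A_add b t i])

/-- the shifted quadratic functional `⟨Jᵗ (pq)(J) δ, δ⟩`. -/
noncomputable def Qf (b : ℕ → ℝ) (p q : ℝ[X]) (t : ℕ) : ℝ :=
  ((Jlin b)^t) (vec b (p * q)) 0

lemma Qf_expand (b : ℕ → ℝ) (p q : ℝ[X]) (t : ℕ) (N M : ℕ)
    (hN : p.natDegree < N) (hM : q.natDegree < M) :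
    Qf b p q t = ∑ i ∈ Finset.range N, ∑ k ∈ Finset.range M,
      p.coeff i * q.coeff k * moment b (t + i + k) := by
  unfold Qf
  have hv : vec b (p * q) = (Polynomial.aeval (Jlin b) p) (vec b q) := by
    unfold vec
    rw [map_mul]
    rfl
  rw [hv, Polynomial.aeval_eq_sum_range' hN, LinearMap.sum_apply, map_sum]
  rw [Finset.sum_apply]
  refine Finset.sum_congr rfl (fun i _ => ?_)
  rw [LinearMap.smul_apply, map_smul]
  have : ((Jlin b)^t) (((Jlin b)^i) (vec b q))
      = ∑ k ∈ Finset.range M, q.coeff k • A b (t + i + k) := by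
    rw [pow_vec b i (q) M hM, map_sum]
    refine Finset.sum_congr rfl (fun k _ => ?_)
    rw [map_smul]
    congr 1
    rw [show t+i+k = t+(i+k) from by omega]
    rw [A_add b t (i+k)]
  rw [this]
  simp only [Pi.smul_apply, Finset.sum_apply, smul_eq_mul, Finset.mul_sum]
  exact Finset.sum_congr rfl (fun k _ => by rw [moment_eq]; ring)

lemma sum_mul_sip (u v : ℕ → ℝ) (F G : ℕ → ℕ → ℝ) (N K M : ℕ) :
    ∑ j ∈ Finset.range M,
        (∑ i ∈ Finset.range N, u i * F i j) * (∑ k ∈ Finset.range K, v k * G k j)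
      = ∑ i ∈ Finset.range N, ∑ k ∈ Finset.range K,
          u i * v k * (∑ j ∈ Finset.range M, F i j * G k j) := by
  rw [Finset.sum_congr rfl (fun j _ => Finset.sum_mul_sum (Finset.range N) (Finset.range K)
    (fun i => u i * F i j) (fun k => v k * G k j))]
  rw [Finset.sum_comm]
  refine Finset.sum_congr rfl fun i _ => ?_
  rw [Finset.sum_comm]
  refine Finset.sum_congr rfl fun k _ => ?_
  rw [Finset.mul_sum]
  exact Finset.sum_congr rfl fun j _ => by ring

lemma Qf_sip (b : ℕ → ℝ) (p q : ℝ[X]) (s t : ℕ) (M : ℕ)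
    (hM : p.natDegree + s + (q.natDegree + t) < M) :
    Qf b p q (s + t) = Sip (((Jlin b)^s) (vec b p)) (((Jlin b)^t) (vec b q)) M := by
  rw [Qf_expand b p q (s+t) (p.natDegree+1) (q.natDegree+1)
      (Nat.lt_succ_self _) (Nat.lt_succ_self _)]
  rw [Sip, pow_vec b s p (p.natDegree+1) (Nat.lt_succ_self _),
      pow_vec b t q (q.natDegree+1) (Nat.lt_succ_self _)]
  simp only [Finset.sum_apply, Pi.smul_apply, smul_eq_mul]
  rw [sum_mul_sip]
  refine (Finset.sum_congr rfl fun i hi => Finset.sum_congr rfl fun k hk => ?_)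
  simp only [Finset.mem_range] at hi hk
  rw [show (∑ j ∈ Finset.range M, A b (s+i) j * A b (t+k) j)
      = Sip (A b (s+i)) (A b (t+k)) M from rfl,
    Sip_A b (t+k) (s+i) M (by omega)]
  congr 2
  omega

lemma Sip_nonneg (f : ℕ → ℝ) (M : ℕ) : 0 ≤ Sip f f M :=
  Finset.sum_nonneg (fun j _ => mul_self_nonneg _)

lemma Qf_nonneg (b : ℕ → ℝ) (p : ℝ[X]) (m : ℕ) : 0 ≤ Qf b p p (2*m) := by
  have h := Qf_sip b p p m m (2*(p.natDegree + m) + 1) (by omega)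
  rw [show m + m = 2*m from by omega] at h
  rw [h]
  exact Sip_nonneg _ _

lemma Sip_CS (f g : ℕ → ℝ) (M : ℕ) : (Sip f g M)^2 ≤ Sip f f M * Sip g g M := by
  have := Finset.sum_mul_sq_le_sq_mul_sq (Finset.range M) f g
  unfold Sip
  calc (∑ j ∈ Finset.range M, f j * g j)^2 ≤
      (∑ j ∈ Finset.range M, f j ^2) * (∑ j ∈ Finset.range M, g j ^2) := this
    _ = (∑ j ∈ Finset.range M, f j * f j) * (∑ j ∈ Finset.range M, g j * g j) := by
        simp [sq]

lemma Qf_CS (b : ℕ → ℝ) (p : ℝ[X]) (s t : ℕ) :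
    (Qf b p p (s + t))^2 ≤ Qf b p p (2*s) * Qf b p p (2*t) := by
  set M := 2*p.natDegree + 2*s + 2*t + 1 with hM
  rw [Qf_sip b p p s t M (by omega)]
  have h1 := Qf_sip b p p s s M (by omega)
  have h2 := Qf_sip b p p t t M (by omega)
  rw [show s + s = 2*s from by omega] at h1
  rw [show t + t = 2*t from by omega] at h2
  rw [h1, h2]
  exact Sip_CS _ _ _

lemma Qf_growth (b : ℕ → ℝ) (L Mx : ℝ) (hL0 : 0 ≤ L) (hMx0 : 0 ≤ Mx) (hLM : L ≤ Mx^2)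
    (hmom : ∀ a, moment b (2*a) ≤ L^a) (hmnn : ∀ a, 0 ≤ moment b (2*a))
    (p : ℝ[X]) (m : ℕ) :
    Qf b p p (2*m) ≤ (∑ i ∈ Finset.range (p.natDegree+1), |p.coeff i| * Mx^i)^2 * L^m := by
  rw [Qf_expand b p p (2*m) (p.natDegree+1) (p.natDegree+1)
      (Nat.lt_succ_self _) (Nat.lt_succ_self _)]
  have key : ∀ i k, p.coeff i * p.coeff k * moment b (2*m + i + k)
      ≤ (|p.coeff i| * Mx^i) * (|p.coeff k| * Mx^k) * L^m := by
    intro i k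
    rcases Nat.even_or_odd (i + k) with he | ho
    · obtain ⟨u, hu⟩ := he
      have h1 : moment b (2*m + i + k) = moment b (2*(m+u)) := by congr 1; omega
      have h2 : moment b (2*(m+u)) ≤ L^m * Mx^(i+k) := by
        calc moment b (2*(m+u)) ≤ L^(m+u) := hmom _
          _ = L^m * L^u := pow_add L m u
          _ ≤ L^m * (Mx^2)^u :=
            mul_le_mul_of_nonneg_left (pow_le_pow_left₀ hL0 hLM u) (pow_nonneg hL0 m)
          _ = L^m * Mx^(i+k) := by
              rw [← pow_mul, show 2*u = i+k from by omega]
      have h3 : p.coeff i * p.coeff k * moment b (2*m+i+k)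
          ≤ |p.coeff i| * |p.coeff k| * moment b (2*m+i+k) := by
        apply mul_le_mul_of_nonneg_right _ (by rw [h1]; exact hmnn _)
        calc p.coeff i * p.coeff k ≤ |p.coeff i * p.coeff k| := le_abs_self _
          _ = |p.coeff i| * |p.coeff k| := abs_mul _ _
      calc p.coeff i * p.coeff k * moment b (2*m+i+k)
          ≤ |p.coeff i| * |p.coeff k| * moment b (2*m+i+k) := h3
        _ ≤ |p.coeff i| * |p.coeff k| * (L^m * Mx^(i+k)) := by
            apply mul_le_mul_of_nonneg_left _ (by positivity)
            rw [h1]; exact h2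
        _ = (|p.coeff i| * Mx^i) * (|p.coeff k| * Mx^k) * L^m := by
            rw [pow_add]; ring
    · have h1 : moment b (2*m + i + k) = 0 := by
        apply moment_odd
        rcases ho with ⟨u, hu⟩
        exact ⟨m + u, by omega⟩
      rw [h1, mul_zero]
      positivity
  calc ∑ i ∈ Finset.range (p.natDegree+1), ∑ k ∈ Finset.range (p.natDegree+1),
        p.coeff i * p.coeff k * moment b (2*m + i + k)
      ≤ ∑ i ∈ Finset.range (p.natDegree+1), ∑ k ∈ Finset.range (p.natDegree+1),
        (|p.coeff i| * Mx^i) * (|p.coeff k| * Mx^k) * L^m :=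
        Finset.sum_le_sum (fun i _ => Finset.sum_le_sum (fun k _ => key i k))
    _ = (∑ i ∈ Finset.range (p.natDegree+1), |p.coeff i| * Mx^i)^2 * L^m := by
        rw [sq, Finset.sum_mul_sum]
        rw [Finset.sum_mul]
        refine Finset.sum_congr rfl fun i _ => ?_
        rw [Finset.sum_mul]

lemma claimA (b : ℕ → ℝ) (L : ℝ) (hL1 : 0 < L)
    (hmom : ∀ a, moment b (2*a) ≤ L^a) (hmnn : ∀ a, 0 ≤ moment b (2*a)) (p : ℝ[X]) :
    Qf b p p 2 ≤ L * Qf b p p 0 := by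
  set r : ℕ → ℝ := fun m => Qf b p p (2*m) with hr
  have rnn : ∀ m, 0 ≤ r m := fun m => Qf_nonneg b p m
  have rcs : ∀ m, (r (m+1))^2 ≤ r m * r (m+2) := by
    intro m
    have := Qf_CS b p m (m+2)
    rw [show m + (m+2) = 2*(m+1) from by omega] at this
    exact this
  set Mx := max 1 L with hMx
  have hLM : L ≤ Mx^2 := by
    rcases le_total L 1 with h | h
    · calc L ≤ 1 := h
        _ ≤ Mx^2 := by rw [hMx]; nlinarith [le_max_left 1 L]
    · calc L = L * 1 := (mul_one L).symm
        _ ≤ L * L := by nlinarith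
        _ ≤ Mx^2 := by rw [sq]; apply mul_le_mul (le_max_right 1 L) (le_max_right 1 L) (by linarith) (by positivity)
  set C := (∑ i ∈ Finset.range (p.natDegree+1), |p.coeff i| * Mx^i)^2 with hC
  have rgrow : ∀ m, r m ≤ C * L^m := fun m =>
    Qf_growth b L Mx (le_of_lt hL1) (by positivity) hLM hmom hmnn p m
  by_contra hcon
  push_neg at hcon
  -- hcon : L * Qf b p p 0 < Qf b p p 2, i.e. L * r 0 < r 1
  have hcon' : L * r 0 < r 1 := by
    have e0 : r 0 = Qf b p p 0 := by rw [hr]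
    have e1 : r 1 = Qf b p p 2 := by rw [hr]
    rw [e0, e1]; exact hcon
  have r0pos : 0 < r 0 := by
    rcases (rnn 0).lt_or_eq with h | h
    · exact h
    · exfalso
      have : (r 1)^2 ≤ 0 := by
        calc (r 1)^2 ≤ r 0 * r 2 := rcs 0
          _ = 0 := by rw [← h, zero_mul]
      have h1 : r 1 = 0 := by nlinarith [sq_nonneg (r 1)]
      rw [h1, ← h, mul_zero] at hcon'
      exact lt_irrefl 0 hcon'
  set x := r 1 / r 0 with hx
  have hxL : L < x := by
    rw [hx, lt_div_iff₀ r0pos]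
    linarith [hcon']
  have step : ∀ m, 0 < r m ∧ x * r m ≤ r (m+1) := by
    intro m
    induction m with
    | zero =>
      refine ⟨r0pos, ?_⟩
      rw [hx, div_mul_cancel₀ _ (ne_of_gt r0pos)]
    | succ m ih =>
      obtain ⟨hm, hstep⟩ := ih
      have hx0 : 0 < x := lt_of_le_of_lt (le_of_lt hL1) hxL
      have hm1 : 0 < r (m+1) := lt_of_lt_of_le (by positivity) hstep
      refine ⟨hm1, ?_⟩
      have h1 : (x * r (m+1)) * r m ≤ r (m+2) * r m := by
        calc (x * r (m+1)) * r m = (x * r m) * r (m+1) := by ring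
          _ ≤ r (m+1) * r (m+1) := mul_le_mul_of_nonneg_right hstep (le_of_lt hm1)
          _ = (r (m+1))^2 := (sq _).symm
          _ ≤ r m * r (m+2) := rcs m
          _ = r (m+2) * r m := mul_comm _ _
      exact le_of_mul_le_mul_right h1 hm
  have pow_le : ∀ m, x^m * r 0 ≤ r m := by
    intro m
    induction m with
    | zero => simp
    | succ m ih =>
      calc x^(m+1) * r 0 = x * (x^m * r 0) := by ring
        _ ≤ x * r m := by
            apply mul_le_mul_of_nonneg_left ih (le_of_lt (lt_of_le_of_lt (le_of_lt hL1) hxL))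
        _ ≤ r (m+1) := (step m).2
  have hxl1 : 1 < x / L := (one_lt_div hL1).mpr hxL
  obtain ⟨m, hm⟩ := pow_unbounded_of_one_lt (C / r 0) hxl1
  have h1 : x^m * r 0 ≤ C * L^m := le_trans (pow_le m) (rgrow m)
  have h2 : (x/L)^m ≤ C / r 0 := by
    rw [div_pow, div_le_div_iff₀ (by positivity) r0pos]
    calc x^m * r 0 ≤ C * L^m := h1
      _ = C * L^m := rfl
  linarith [lt_of_lt_of_le hm h2]

noncomputable def Dd (r : ℝ) : ℕ → ℝ[X]
  | 0 => 1
  | 1 => X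
  | (n+2) => X * Dd r (n+1) - C r * Dd r n

noncomputable def Cc (r : ℝ) : ℕ → ℝ[X]
  | 0 => 2
  | 1 => X
  | (n+2) => X * Cc r (n+1) - C r * Cc r n

lemma Dd_rec (r : ℝ) (n : ℕ) : Dd r (n+2) = X * Dd r (n+1) - C r * Dd r n := rfl
lemma Cc_rec (r : ℝ) (n : ℕ) : Cc r (n+2) = X * Cc r (n+1) - C r * Cc r n := rfl

lemma wron (r : ℝ) : ∀ n, Dd r (n+1) * Dd r (n+1) - Dd r (n+2) * Dd r n = C (r^(n+1)) := by
  intro n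
  induction n with
  | zero =>
    show X * X - (X * X - C r * 1) * 1 = C (r^1)
    rw [pow_one]; ring
  | succ n ih =>
    have h2 := Dd_rec r n
    have h3 := Dd_rec r (n+1)
    rw [show (r^(n+2)) = r * r^(n+1) from by ring, map_mul]
    linear_combination (C r) * ih + Dd r (n+2) * h2 - Dd r (n+1) * h3

lemma ccdd (r : ℝ) : ∀ n, Cc r (n+2) = Dd r (n+2) - C r * Dd r n := by
  intro n
  induction n using Nat.twoStepInduction with
  | zero =>
    show X * X - C r * 2 = X * Dd r 1 - C r * Dd r 0 - C r * Dd r 0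
    show X * X - C r * 2 = X * X - C r * 1 - C r * 1
    ring
  | one =>
    show X * (X * X - C r * 2) - C r * X
      = X * (X * Dd r 1 - C r * Dd r 0) - C r * Dd r 1 - C r * X
    show X * (X * X - C r * 2) - C r * X = X * (X * X - C r * 1) - C r * X - C r * X
    ring
  | more n ih1 ih2 =>
    have e1 : Cc r (n+4) = X * Cc r (n+3) - C r * Cc r (n+2) := rfl
    have e2 : Dd r (n+4) = X * Dd r (n+3) - C r * Dd r (n+2) := rfl
    have e3 : Dd r (n+2) = X * Dd r (n+1) - C r * Dd r n := rfl
    calc Cc r (n+2+2) = X * Cc r (n+3) - C r * Cc r (n+2) := rfl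
      _ = X * (Dd r (n+3) - C r * Dd r (n+1)) - C r * (Dd r (n+2) - C r * Dd r n) := by
          rw [← ih1, ← ih2]
      _ = (X * Dd r (n+3) - C r * Dd r (n+2)) - C r * (X * Dd r (n+1) - C r * Dd r n) := by
          ring
      _ = Dd r (n+2+2) - C r * Dd r (n+2) := by rw [← e2, ← e3]

lemma ident (r : ℝ) : ∀ n, Cc r (n+1) * Cc r (n+1) + (C (4*r) - X^2) * (Dd r n * Dd r n)
    = C (4 * r^(n+1)) := by
  intro n
  cases n with
  | zero =>
    show X * X + (C (4*r) - X^2) * (1 * 1) = C (4 * r^1)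
    rw [pow_one]; ring
  | succ n =>
    have hA := ccdd r n
    have h2 := Dd_rec r n
    have w := wron r n
    rw [show (4:ℝ) * r^(n+2) = (4*r) * r^(n+1) from by ring,
        show C ((4*r) * r^(n+1)) = C (4*r) * C (r^(n+1)) from map_mul C _ _]
    have h4 : C ((4:ℝ)*r) = 4 * C r := by
      rw [map_mul, map_ofNat]
    linear_combination (Cc r (n+2) + Dd r (n+2) - C r * Dd r n) * hA
      + (Dd r (n+2) + C r * Dd r n + X * Dd r (n+1)) * h2 + (C (4*r)) * w
      + (Dd r (n+2) * Dd r n) * h4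

lemma Cc_natDegree (r : ℝ) : ∀ n, (Cc r n).natDegree ≤ n := by
  intro n
  induction n using Nat.twoStepInduction with
  | zero => show (2 : ℝ[X]).natDegree ≤ 0; simp [Polynomial.natDegree_ofNat]
  | one => show (X : ℝ[X]).natDegree ≤ 1; simp [Polynomial.natDegree_X]
  | more n ih1 ih2 =>
    rw [Cc_rec]
    apply le_trans (Polynomial.natDegree_sub_le _ _)
    apply max_le
    · apply le_trans (Polynomial.natDegree_mul_le)
      simpa [Polynomial.natDegree_X] using by omega
    · apply le_trans (Polynomial.natDegree_mul_le)
      simp only [Polynomial.natDegree_C]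
      omega

lemma Cc_coeff (r : ℝ) : ∀ n, (Cc r (n+1)).coeff (n+1) = 1 := by
  intro n
  induction n using Nat.twoStepInduction with
  | zero => show (X : ℝ[X]).coeff 1 = 1; simp
  | one =>
    show (X * X - C r * 2 : ℝ[X]).coeff 2 = 1
    rw [show (X * X : ℝ[X]) = X^2 from (sq X).symm]
    rw [Polynomial.coeff_sub, Polynomial.coeff_C_mul]
    simp
  | more n ih1 ih2 =>
    have ih2' : (Cc r (n+1+1)).coeff (n+2) = 1 := ih2
    have hz : (Cc r (n+1)).coeff (n+2+1) = 0 := by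
      apply Polynomial.coeff_eq_zero_of_natDegree_lt
      exact lt_of_le_of_lt (Cc_natDegree r (n+1)) (by omega)
    rw [Cc_rec r (n+1), Polynomial.coeff_sub, Polynomial.coeff_C_mul,
      Polynomial.coeff_X_mul, ih2', hz]
    simp

lemma Lfun_sub (b : ℕ → ℝ) (p q : ℝ[X]) : Lfun b (p - q) = Lfun b p - Lfun b q := by
  unfold Lfun vec
  rw [map_sub, LinearMap.sub_apply]
  rfl

lemma Lfun_C (b : ℕ → ℝ) (c : ℝ) : Lfun b (C c) = c := by
  unfold Lfun vec
  rw [Polynomial.aeval_C, Module.algebraMap_end_apply]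
  show c * δ 0 = c
  simp [δ]

lemma Lfun_Cmul (b : ℕ → ℝ) (c : ℝ) (w : ℝ[X]) : Lfun b (C c * w) = c * Lfun b w := by
  unfold Lfun vec
  rw [map_mul, Polynomial.aeval_C, Module.End.mul_apply, Module.algebraMap_end_apply]
  rfl

lemma Lfun_Qf0 (b : ℕ → ℝ) (p q : ℝ[X]) : Lfun b (p * q) = Qf b p q 0 := by
  unfold Lfun Qf
  rw [pow_zero, Module.End.one_apply]

lemma Lfun_X2 (b : ℕ → ℝ) (p q : ℝ[X]) : Lfun b (X^2 * (p * q)) = Qf b p q 2 := by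
  unfold Lfun vec Qf
  rw [map_mul, Polynomial.aeval_X_pow, Module.End.mul_apply]
  rfl

lemma claimB (b : ℕ → ℝ) (L : ℝ) (hL1 : 0 < L)
    (hmom : ∀ a, moment b (2*a) ≤ L^a) (hmnn : ∀ a, 0 ≤ moment b (2*a)) (n : ℕ) :
    (∏ i ∈ Finset.range (n+1), b i)^2 ≤ 4 * (L/4)^(n+1) := by
  set r := L / 4 with hrdef
  set P := Cc r (n+1) with hP
  set D := Dd r n with hD
  have hdeg : P.natDegree ≤ n+1 := Cc_natDegree r (n+1)
  -- lower bound
  have h1 : (∏ i ∈ Finset.range (n+1), b i)^2 ≤ Lfun b (P * P) := by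
    rw [Lfun_Qf0]
    have hsip := Qf_sip b P P 0 0 (2*(n+1)+1) (by omega)
    rw [show (0:ℕ) + 0 = 0 from rfl, pow_zero, Module.End.one_apply] at hsip
    rw [hsip]
    have hvp : vec b P (n+1) = ∏ i ∈ Finset.range (n+1), b i := by
      rw [vec_apply b P (n+2) (by omega) (n+1)]
      rw [Finset.sum_eq_single (n+1)]
      · rw [Cc_coeff r n, A_diag, one_mul]
      · intro i hi hne
        simp only [Finset.mem_range] at hi
        rw [A_eq_zero b i (n+1) (by omega), mul_zero]
      · intro h; exact absurd (Finset.mem_range.mpr (by omega)) h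
    calc (∏ i ∈ Finset.range (n+1), b i)^2
        = vec b P (n+1) * vec b P (n+1) := by rw [hvp, sq]
      _ ≤ Sip (vec b P) (vec b P) (2*(n+1)+1) := by
          unfold Sip
          exact Finset.single_le_sum (f := fun j => vec b P j * vec b P j)
            (fun j _ => mul_self_nonneg _) (Finset.mem_range.mpr (by omega))
  -- upper bound
  have h2 : Lfun b (P * P) ≤ 4 * r^(n+1) := by
    have hid := ident r n
    have hPP : P * P = C (4 * r^(n+1)) - (C (4*r) - X^2) * (D * D) := by
      rw [← hid]; ring
    have hexp : (C (4*r) - X^2) * (D * D) = C (4*r) * (D * D) - X^2 * (D * D) := by ring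
    rw [hPP, Lfun_sub, Lfun_C, hexp, Lfun_sub, Lfun_Cmul, Lfun_Qf0, Lfun_X2]
    have hA := claimA b L hL1 hmom hmnn D
    have hL4 : L = 4 * r := by rw [hrdef]; ring
    have hQnn : 0 ≤ Qf b D D 0 := by
      have := Qf_nonneg b D 0
      rwa [mul_zero] at this
    nlinarith [hA, hQnn]
  linarith [h1, h2]

lemma moment_two_eq (b : ℕ → ℝ) (n : ℕ) :
    moment b (2*n) = Sip (A b n) (A b n) (2*n+1) := by
  rw [Sip_A b n n (2*n+1) (by omega)]
  congr 1
  omega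

lemma moment_even_nonneg (b : ℕ → ℝ) (n : ℕ) : 0 ≤ moment b (2*n) := by
  rw [moment_two_eq]; exact Sip_nonneg _ _

lemma moment_even_ge (b : ℕ → ℝ) (n : ℕ) :
    (∏ i ∈ Finset.range n, b i)^2 ≤ moment b (2*n) := by
  rw [moment_two_eq]
  calc (∏ i ∈ Finset.range n, b i)^2 = A b n n * A b n n := by rw [A_diag, sq]
    _ ≤ Sip (A b n) (A b n) (2*n+1) :=
        Finset.single_le_sum (f := fun j => A b n j * A b n j)
          (fun j _ => mul_self_nonneg _) (Finset.mem_range.mpr (by omega))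

lemma moment_even_pos (b : ℕ → ℝ) (hb : ∀ n, 0 < b n) (n : ℕ) : 0 < moment b (2*n) := by
  have h1 : 0 < (∏ i ∈ Finset.range n, b i)^2 := by
    have : 0 < ∏ i ∈ Finset.range n, b i := Finset.prod_pos (fun i _ => hb i)
    positivity
  exact lt_of_lt_of_le h1 (moment_even_ge b n)

lemma moment_logconvex (b : ℕ → ℝ) (n : ℕ) :
    (moment b (2*(n+1)))^2 ≤ moment b (2*n) * moment b (2*(n+2)) := by
  set M := 2*(n+2)+1 with hM
  have h0 : moment b (2*(n+1)) = Sip (A b n) (A b (n+2)) M := by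
    rw [Sip_A b (n+2) n M (by omega)]
    congr 1; omega
  have h1 : moment b (2*n) = Sip (A b n) (A b n) M := by
    rw [Sip_A b n n M (by omega)]; congr 1; omega
  have h2 : moment b (2*(n+2)) = Sip (A b (n+2)) (A b (n+2)) M := by
    rw [Sip_A b (n+2) (n+2) M (by omega)]; congr 1; omega
  rw [h0, h1, h2]
  exact Sip_CS _ _ _

lemma moment_upper (b : ℕ → ℝ) (B : ℝ) (hB0 : 0 ≤ B) (hB : ∀ n, b n ≤ B)
    (hb : ∀ n, 0 < b n) (n : ℕ) : moment b (2*n) ≤ (2*B)^(2*n) := by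
  rw [moment_eq]
  calc A b (2*n) 0 ≤ |A b (2*n) 0| := le_abs_self _
    _ ≤ (2*B)^(2*n) := A_bound b B hB0 hB hb (2*n) 0

lemma moment_zero (b : ℕ → ℝ) : moment b 0 = 1 := by
  rw [moment_eq]
  simp [A, δ]

lemma ratio_mono (t : ℕ → ℝ) (h0 : t 0 = 0) (hconv : ∀ n, 2*t (n+1) ≤ t n + t (n+2)) :
    ∀ n m, 1 ≤ n → n ≤ m → t n / n ≤ t m / m := by
  set d : ℕ → ℝ := fun n => t (n+1) - t n with hd
  have dmono : Monotone d := monotone_nat_of_le_succ (fun n => by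
    have := hconv n; simp only [hd]; linarith)
  have tsum : ∀ n, t n = ∑ k ∈ Finset.range n, d k := by
    intro n
    induction n with
    | zero => simpa using h0
    | succ n ih => rw [Finset.sum_range_succ, ← ih]; simp [hd]
  have step : ∀ n : ℕ, t n * (n+1) ≤ t (n+1) * n := by
    intro n
    have h1 : t n ≤ n * d n := by
      rw [tsum n]
      calc ∑ k ∈ Finset.range n, d k ≤ ∑ k ∈ Finset.range n, d n :=
          Finset.sum_le_sum (fun k hk =>
            dmono (le_of_lt (Finset.mem_range.mp hk)))
        _ = n * d n := by rw [Finset.sum_const, Finset.card_range, nsmul_eq_mul]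
    have h2 : t (n+1) = t n + d n := by simp [hd]
    rw [h2]
    push_cast
    nlinarith [h1]
  intro n m hn hm
  induction m with
  | zero => omega
  | succ m ih =>
    rcases Nat.lt_or_ge n (m+1) with h | h
    · have hnm : n ≤ m := by omega
      have hm1 : 1 ≤ m := by omega
      refine le_trans (ih hnm) ?_
      have hmpos : (0:ℝ) < m := by exact_mod_cast hm1
      have hm1pos : (0:ℝ) < (m:ℝ)+1 := by linarith
      rw [div_le_div_iff₀ hmpos (by push_cast; linarith)]
      have := step m
      push_cast at this ⊢
      nlinarith [this]
    · have : n = m+1 := by omega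
      subst this
      exact le_rfl

end S19

/-- for a bounded positive sequence `(b_n)`, with
`U_n = s_{2n}/(b_0²⋯b_{n-1}²)`, one has `liminf U_n^{1/n} ≥ 4`
(stated in `ℝ≥0∞` so that the `liminf` is well-behaved). -/
theorem stmt19 (b : ℕ → ℝ) (hb : ∀ n, 0 < b n) (hbd : BddAbove (Set.range b)) :
    (4 : ENNReal) ≤ Filter.liminf (fun n : ℕ =>
      ENNReal.ofReal
        ((moment b (2 * n) / ∏ i ∈ Finset.range n, (b i) ^ 2) ^ ((n : ℝ)⁻¹)))
      Filter.atTop := by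

  classical
  open S19 Real in
  obtain ⟨B, hBmem⟩ := hbd
  have hB : ∀ n, b n ≤ B := fun n => hBmem (Set.mem_range_self n)
  have hB0 : 0 < B := lt_of_lt_of_le (hb 0) (hB 0)
  set t : ℕ → ℝ := fun n => Real.log (moment b (2*n)) with ht
  have tpos : ∀ n, 0 < moment b (2*n) := fun n => moment_even_pos b hb n
  have t0 : t 0 = 0 := by simp [ht, moment_zero]
  have tconv : ∀ n, 2*t (n+1) ≤ t n + t (n+2) := by
    intro n
    have h := moment_logconvex b n
    have h1 : Real.log ((moment b (2*(n+1)))^2)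
        ≤ Real.log (moment b (2*n) * moment b (2*(n+2))) := by
      exact (Real.log_le_log_iff (pow_pos (tpos (n+1)) 2) (mul_pos (tpos n) (tpos (n+2)))).mpr h
    rw [Real.log_pow, Real.log_mul (ne_of_gt (tpos n)) (ne_of_gt (tpos (n+2)))] at h1
    simpa [ht] using h1
  have hrat := ratio_mono t t0 tconv
  set SS : Set ℝ := Set.range (fun n : ℕ => t (n+1) / (((n+1:ℕ)):ℝ)) with hSS
  have hSSne : SS.Nonempty := ⟨t 1 / ((1:ℕ):ℝ), ⟨0, rfl⟩⟩
  have hub : ∀ x ∈ SS, x ≤ 2 * Real.log (2*B) := by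
    rintro x ⟨n, rfl⟩
    have h1 : moment b (2*(n+1)) ≤ (2*B)^(2*(n+1)) :=
      moment_upper b B (le_of_lt hB0) hB hb (n+1)
    have h2 : t (n+1) ≤ ((n+1:ℕ):ℝ) * (2 * Real.log (2*B)) := by
      have h3 := (Real.log_le_log_iff (tpos (n+1)) (by positivity)).mpr h1
      rw [Real.log_pow] at h3
      calc t (n+1) ≤ ((2*(n+1):ℕ):ℝ) * Real.log (2*B) := h3
        _ = ((n+1:ℕ):ℝ) * (2 * Real.log (2*B)) := by push_cast; ring
    rw [div_le_iff₀ (by positivity)]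
    linarith [h2]
  have hbdd : BddAbove SS := ⟨_, fun x hx => hub x hx⟩
  set l := sSup SS with hldef
  set L := Real.exp l with hLdef
  have hL1 : 0 < L := Real.exp_pos l
  have hmom : ∀ a, moment b (2*a) ≤ L^a := by
    intro a
    cases a with
    | zero => simp [moment_zero]
    | succ n =>
      have h1 : t (n+1) / ((n+1:ℕ):ℝ) ≤ l := le_csSup hbdd ⟨n, rfl⟩
      have hpos : (0:ℝ) < ((n+1:ℕ):ℝ) := by positivity
      have h2 : t (n+1) ≤ ((n+1:ℕ):ℝ) * l := by
        rw [div_le_iff₀ hpos] at h1; linarith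
      have h3 : moment b (2*(n+1)) = Real.exp (t (n+1)) :=
        (Real.exp_log (tpos (n+1))).symm
      rw [h3]
      calc Real.exp (t (n+1)) ≤ Real.exp (((n+1:ℕ):ℝ)*l) := Real.exp_le_exp.mpr h2
        _ = L^(n+1) := by rw [Real.exp_nat_mul]
  have hmnn : ∀ a, 0 ≤ moment b (2*a) := fun a => moment_even_nonneg b a
  rw [Filter.le_liminf_iff]
  intro y hy
  have hytop : y ≠ ⊤ := hy.ne_top
  set ty := y.toReal with hty
  have hty4 : ty < 4 := by
    have := (ENNReal.toReal_lt_toReal hytop (by simp : (4:ENNReal) ≠ ⊤)).mpr hy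
    simpa using this
  have hty0 : 0 ≤ ty := ENNReal.toReal_nonneg
  set c := (ty + 4)/2 with hcdef
  have hc0 : 0 < c := by rw [hcdef]; linarith
  have hc4 : c < 4 := by rw [hcdef]; linarith
  have htyc : ty < c := by rw [hcdef]; linarith
  set ε := Real.log (4/c) / 2 with hεdef
  have hε : 0 < ε := by
    have h1 : 1 < 4/c := (one_lt_div hc0).mpr hc4
    have := Real.log_pos h1
    rw [hεdef]; linarith
  set E := Real.exp (-ε) with hEdef
  have hE0 : 0 < E := Real.exp_pos _
  have hE2 : E^2 = c/4 := by
    rw [hEdef, ← Real.exp_nat_mul]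
    have : ((2:ℕ):ℝ) * (-ε) = -Real.log (4/c) := by rw [hεdef]; push_cast; ring
    rw [this, Real.exp_neg, Real.exp_log (by positivity)]
    rw [inv_div]
  obtain ⟨x0, hx0mem, hx0⟩ := exists_lt_of_lt_csSup hSSne (show l - ε < l by linarith)
  obtain ⟨n0, rfl⟩ := hx0mem
  set N := max (n0+1) (⌈(3:ℝ)/ε⌉₊ + 1) with hN
  filter_upwards [Filter.eventually_ge_atTop N] with n hn
  have hn1 : 1 ≤ n := by omega
  have hnn0 : n0+1 ≤ n := by omega
  have hnpos : (0:ℝ) < (n:ℝ) := by exact_mod_cast hn1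
  -- lower bound on moment
  have hratn : l - ε < t n / (n:ℝ) := lt_of_lt_of_le hx0 (hrat (n0+1) n (by omega) hnn0)
  have htn : (n:ℝ) * (l - ε) < t n := by
    rw [lt_div_iff₀ hnpos] at hratn; linarith [hratn]
  have hs_low : (L*E)^n ≤ moment b (2*n) := by
    have h1 : Real.exp ((n:ℝ) * (l - ε)) ≤ Real.exp (t n) := Real.exp_le_exp.mpr (le_of_lt htn)
    rw [Real.exp_log (tpos n)] at h1
    calc (L*E)^n = Real.exp (l + (-ε))^n := by rw [Real.exp_add, hLdef, hEdef]
      _ = Real.exp ((n:ℝ) * (l + (-ε))) := (Real.exp_nat_mul _ n).symm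
      _ ≤ moment b (2*n) := by
          rw [show l + (-ε) = l - ε from by ring]; exact h1
  -- upper bound on product
  have hGB : (∏ i ∈ Finset.range n, b i)^2 ≤ 4*(L/4)^n := by
    cases n with
    | zero => omega
    | succ m => exact claimB b L hL1 hmom hmnn m
  have hprodpos : 0 < ∏ i ∈ Finset.range n, b i := Finset.prod_pos (fun i _ => hb i)
  have hGpos : 0 < (∏ i ∈ Finset.range n, b i)^2 := by positivity
  have hgden : (0:ℝ) < 4*(L/4)^n := by positivity
  -- exp(ε n) ≥ 4
  have hn4 : (4:ℝ) ≤ Real.exp (ε * n) := by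
    have h1 : (3:ℝ)/ε ≤ n := by
      calc (3:ℝ)/ε ≤ (⌈(3:ℝ)/ε⌉₊ : ℝ) := Nat.le_ceil _
        _ ≤ n := by exact_mod_cast (by omega : ⌈(3:ℝ)/ε⌉₊ ≤ n)
    have h2 : (3:ℝ) ≤ ε * n := by
      rw [div_le_iff₀ hε] at h1; linarith
    calc (4:ℝ) = 3 + 1 := by norm_num
      _ ≤ ε * n + 1 := by linarith
      _ ≤ Real.exp (ε * n) := Real.add_one_le_exp _
  have h4E : 4 * E^n ≤ 1 := by
    have hEn : E^n = (Real.exp (ε * (n:ℝ)))⁻¹ := by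
      rw [hEdef, ← Real.exp_nat_mul, ← Real.exp_neg]
      congr 1
      ring
    rw [hEn]
    have hexp_pos : 0 < Real.exp (ε * (n:ℝ)) := Real.exp_pos _
    have hinv : 0 ≤ (Real.exp (ε * (n:ℝ)))⁻¹ := by positivity
    have h5 : 4 * (Real.exp (ε * (n:ℝ)))⁻¹ ≤ Real.exp (ε * (n:ℝ)) * (Real.exp (ε * (n:ℝ)))⁻¹ :=
      mul_le_mul_of_nonneg_right hn4 hinv
    rwa [mul_inv_cancel₀ (ne_of_gt hexp_pos)] at h5
  -- key pow inequality
  have key : c^n * (4*(L/4)^n) ≤ (L*E)^n := by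
    have hc_eq : c = 4 * E^2 := by rw [hE2]; ring
    have e1 : c^n * (4*(L/4)^n) = 4 * ((E^2*L)^n) := by
      rw [hc_eq]
      rw [show (4*E^2)^n * (4*(L/4)^n) = 4 * ((4*E^2)^n * (L/4)^n) from by ring]
      rw [← mul_pow, show (4*E^2)*(L/4) = E^2*L from by ring]
    have e2 : (E^2*L)^n = (L*E)^n * E^n := by
      rw [← mul_pow]
      congr 1
      ring
    rw [e1, e2]
    have hLE : (0:ℝ) < (L*E)^n := by positivity
    nlinarith [h4E, hLE, pow_nonneg (le_of_lt hE0) n]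
  have hU : c^n ≤ moment b (2*n) / ∏ i ∈ Finset.range n, (b i)^2 := by
    rw [Finset.prod_pow]
    have h1 : (L*E)^n / (4*(L/4)^n)
        ≤ moment b (2*n) / (∏ i ∈ Finset.range n, b i)^2 :=
      div_le_div₀ (hmnn n) hs_low hGpos hGB
    have h2 : c^n ≤ (L*E)^n / (4*(L/4)^n) := by
      rw [le_div_iff₀ hgden]
      exact key
    linarith
  have hUc : c ≤ (moment b (2*n) / ∏ i ∈ Finset.range n, (b i)^2) ^ ((n:ℝ)⁻¹) := by
    have h := Real.rpow_le_rpow (by positivity : (0:ℝ) ≤ c^n) hU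
      (by positivity : (0:ℝ) ≤ ((n:ℝ))⁻¹)
    rwa [Real.pow_rpow_inv_natCast (le_of_lt hc0) (by omega : n ≠ 0)] at h
  have hyc : y < ENNReal.ofReal c := by
    rw [show y = ENNReal.ofReal ty from (ENNReal.ofReal_toReal hytop).symm]
    exact (ENNReal.ofReal_lt_ofReal_iff hc0).mpr htyc
  exact lt_of_lt_of_le hyc (ENNReal.ofReal_le_ofReal hUc)
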